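/- Let G be a finite group acting on a set X and Ω : G × G × X → ℝ_{>0} a strictly positive function satisfying the generalized 2-cocycle condition Ω(g,h,kx)·Ω(gh,k,x) = Ω(g,hk,x)·Ω(h,k,x). Then Ω is a coboundary with positive trivializer: there exists χ : G × X → ℝ_{>0} with Ω(g,h,x) = χ(g,hx)·χ(h,x)·χ(gh,x)⁻¹ for all g,h,x. -/
import Mathlib


/-- A strictly positive generalized 2-cocycle on a finite group acting on a set
is a coboundary with a strictly positive trivializer. -/
theorem positive_generalized_cocycle_is_coboundary
    {G : Type*} [Group G] [Fintype G] {X : Type*} [MulAction G X]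
    (Ω : G → G → X → ℝ)
    (hpos : ∀ (g h : G) (x : X), 0 < Ω g h x)
    (hΩ : ∀ (g h k : G) (x : X),
      Ω g h (k • x) * Ω (g * h) k x = Ω g (h * k) x * Ω h k x) :
    ∃ χ : G → X → ℝ, (∀ (g : G) (x : X), 0 < χ g x) ∧
      ∀ (g h : G) (x : X), Ω g h x = χ g (h • x) * χ h x * (χ (g * h) x)⁻¹ := by
  classical
  set n := Fintype.card G with hn
  set P : G → X → ℝ := fun g x => ∏ k : G, Ω k g x with hPdef
  have hP : ∀ g x, 0 < P g x := fun g x => Finset.prod_pos fun k _ => hpos k g x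
  have key : ∀ g h x, P g (h • x) * P h x = Ω g h x ^ n * P (g * h) x := by
    intro g h x
    have e1 : ∏ k : G, (Ω k g (h • x) * Ω (k * g) h x)
        = ∏ k : G, (Ω k (g * h) x * Ω g h x) :=
      Finset.prod_congr rfl fun k _ => hΩ k g h x
    rw [Finset.prod_mul_distrib, Finset.prod_mul_distrib] at e1
    have e2 : ∏ k : G, Ω (k * g) h x = P h x :=
      Fintype.prod_equiv (Equiv.mulRight g) _ _ (fun k => rfl)
    rw [e2, Finset.prod_const, Finset.card_univ] at e1
    rw [e1, mul_comm]
  set c : ℝ := (n : ℝ)⁻¹ with hc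
  have hnne : (n : ℝ) ≠ 0 := by
    exact_mod_cast Fintype.card_pos.ne'
  refine ⟨fun g x => (P g x) ^ c, fun g x => Real.rpow_pos_of_pos (hP g x) _, ?_⟩
  intro g h x
  have hdiv : P g (h • x) * P h x / P (g * h) x = Ω g h x ^ n := by
    rw [key g h x, mul_div_assoc, div_self (hP (g * h) x).ne', mul_one]
  have h1 : (P g (h • x)) ^ c * (P h x) ^ c * ((P (g * h) x) ^ c)⁻¹
      = (P g (h • x) * P h x / P (g * h) x) ^ c := by
    rw [Real.div_rpow (mul_pos (hP _ _) (hP _ _)).le (hP _ _).le,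
      Real.mul_rpow (hP _ _).le (hP _ _).le, div_eq_mul_inv]
  rw [h1, hdiv, ← Real.rpow_natCast (Ω g h x) n, ← Real.rpow_mul (hpos g h x).le,
    mul_inv_cancel₀ hnne, Real.rpow_one]
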